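/- Let T be the final-size map built from positive parameters βᵢⱼ, γᵢ, μᵢ and initial data S₁₀, S₂₀ > 0, I₁₀, I₂₀ ≥ 0, R₁₀, R₂₀ ≥ 0, and set δ = max{β₁₁/μ₁ + β₁₂/μ₂, β₂₁/μ₁ + β₂₂/μ₂}. Then T is sub-δ-homogeneous: for every η ∈ (0,1) and every X = (x₁,x₂) ∈ ℝ²₊, one has η^δ · Tᵢ(X) < Tᵢ(ηX) for i = 1,2. -/
import Mathlib


open Filter

noncomputable def Tmap (β11 β12 β21 β22 μ1 μ2 S10 S20 ε1 ε2 Z1 Z2 N10 N20 : ℝ) :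
    ℝ × ℝ → ℝ × ℝ := fun X =>
  (S10 * ((ε1 * X.1 + Z1) / N10) ^ (β11 / μ1) * ((ε2 * X.2 + Z2) / N20) ^ (β12 / μ2),
   S20 * ((ε1 * X.1 + Z1) / N10) ^ (β21 / μ1) * ((ε2 * X.2 + Z2) / N20) ^ (β22 / μ2))

lemma key_aux (S A B A' B' a b δ η : ℝ) (hS : 0 < S) (hA : 0 < A) (hB : 0 < B)
    (ha : 0 < a) (hb : 0 < b) (hδ : a + b ≤ δ) (hη : 0 < η) (hη1 : η < 1)
    (hA' : η * A < A') (hB' : η * B < B') :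
    η ^ δ * (S * A ^ a * B ^ b) < S * A' ^ a * B' ^ b := by
  have hηA : (0:ℝ) < η * A := by positivity
  have hηB : (0:ℝ) < η * B := by positivity
  have h1 : η ^ δ ≤ η ^ (a + b) :=
    Real.rpow_le_rpow_of_exponent_ge hη hη1.le hδ
  have h2 : η ^ (a + b) * (S * A ^ a * B ^ b) = S * (η * A) ^ a * (η * B) ^ b := by
    rw [Real.rpow_add hη, Real.mul_rpow hη.le hA.le, Real.mul_rpow hη.le hB.le]
    ring
  have hAa : (η * A) ^ a < A' ^ a := Real.rpow_lt_rpow hηA.le hA' ha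
  have hBb : (η * B) ^ b < B' ^ b := Real.rpow_lt_rpow hηB.le hB' hb
  have h3 : S * (η * A) ^ a * (η * B) ^ b < S * A' ^ a * B' ^ b := by
    have h4 : (0:ℝ) < (η * B) ^ b := Real.rpow_pos_of_pos hηB b
    have h5 : (0:ℝ) < A' ^ a := lt_of_le_of_lt (Real.rpow_nonneg hηA.le a) hAa
    have t1 : S * (η * A) ^ a * (η * B) ^ b < S * A' ^ a * (η * B) ^ b :=
      mul_lt_mul_of_pos_right (mul_lt_mul_of_pos_left hAa hS) h4
    have t2 : S * A' ^ a * (η * B) ^ b < S * A' ^ a * B' ^ b :=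
      mul_lt_mul_of_pos_left hBb (by positivity)
    exact t1.trans t2
  calc η ^ δ * (S * A ^ a * B ^ b) ≤ η ^ (a + b) * (S * A ^ a * B ^ b) := by
        have hpos : (0:ℝ) < S * A ^ a * B ^ b := by
          have := Real.rpow_pos_of_pos hA a
          have := Real.rpow_pos_of_pos hB b
          positivity
        exact mul_le_mul_of_nonneg_right h1 hpos.le
    _ = S * (η * A) ^ a * (η * B) ^ b := h2
    _ < S * A' ^ a * B' ^ b := h3

theorem stmt_13
    (β11 β12 β21 β22 γ1 γ2 μ1 μ2 : ℝ)
    (hβ11 : 0 < β11) (hβ12 : 0 < β12) (hβ21 : 0 < β21) (hβ22 : 0 < β22)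
    (hγ1 : 0 < γ1) (hγ2 : 0 < γ2) (hμ1 : 0 < μ1) (hμ2 : 0 < μ2)
    (S10 S20 I10 I20 R10 R20 : ℝ)
    (hS10 : 0 < S10) (hS20 : 0 < S20)
    (hI10 : 0 ≤ I10) (hI20 : 0 ≤ I20)
    (hR10 : 0 ≤ R10) (hR20 : 0 ≤ R20)
    (ε1 ε2 Z1 Z2 N10 N20 : ℝ)
    (hN10 : N10 = S10 + I10 + R10) (hN20 : N20 = S20 + I20 + R20)
    (hε1 : ε1 = μ1 / (γ1 + μ1)) (hε2 : ε2 = μ2 / (γ2 + μ2))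
    (hZ1 : Z1 = (1 - ε1) * N10 + ε1 * R10) (hZ2 : Z2 = (1 - ε2) * N20 + ε2 * R20)
    (T : ℝ × ℝ → ℝ × ℝ)
    (hT : T = Tmap β11 β12 β21 β22 μ1 μ2 S10 S20 ε1 ε2 Z1 Z2 N10 N20)
    (δ : ℝ) (hδ : δ = max (β11 / μ1 + β12 / μ2) (β21 / μ1 + β22 / μ2)) :
    ∀ η : ℝ, 0 < η → η < 1 → ∀ x1 x2 : ℝ, 0 ≤ x1 → 0 ≤ x2 →
      η ^ δ * (T (x1, x2)).1 < (T (η * x1, η * x2)).1 ∧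
      η ^ δ * (T (x1, x2)).2 < (T (η * x1, η * x2)).2 := by
  intro η hη hη1 x1 x2 hx1 hx2
  have hN10p : 0 < N10 := by rw [hN10]; linarith
  have hN20p : 0 < N20 := by rw [hN20]; linarith
  have hε1p : 0 < ε1 := by rw [hε1]; positivity
  have hε2p : 0 < ε2 := by rw [hε2]; positivity
  have hε1lt : ε1 < 1 := by
    rw [hε1]; rw [div_lt_one (by linarith)]; linarith
  have hε2lt : ε2 < 1 := by
    rw [hε2]; rw [div_lt_one (by linarith)]; linarith
  have hZ1p : 0 < Z1 := by
    rw [hZ1]; nlinarith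
  have hZ2p : 0 < Z2 := by
    rw [hZ2]; nlinarith
  have hA : 0 < (ε1 * x1 + Z1) / N10 := by positivity
  have hB : 0 < (ε2 * x2 + Z2) / N20 := by positivity
  have hA' : η * ((ε1 * x1 + Z1) / N10) < (ε1 * (η * x1) + Z1) / N10 := by
    have h : η * (ε1 * x1 + Z1) < ε1 * (η * x1) + Z1 := by nlinarith
    rw [mul_div_assoc']
    exact div_lt_div_of_pos_right h hN10p
  have hB' : η * ((ε2 * x2 + Z2) / N20) < (ε2 * (η * x2) + Z2) / N20 := by
    have h : η * (ε2 * x2 + Z2) < ε2 * (η * x2) + Z2 := by nlinarith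
    rw [mul_div_assoc']
    exact div_lt_div_of_pos_right h hN20p
  have ha1 : 0 < β11 / μ1 := by positivity
  have hb1 : 0 < β12 / μ2 := by positivity
  have ha2 : 0 < β21 / μ1 := by positivity
  have hb2 : 0 < β22 / μ2 := by positivity
  have hδ1 : β11 / μ1 + β12 / μ2 ≤ δ := hδ ▸ le_max_left _ _
  have hδ2 : β21 / μ1 + β22 / μ2 ≤ δ := hδ ▸ le_max_right _ _
  subst hT
  simp only [Tmap]
  constructor
  · exact key_aux S10 _ _ _ _ _ _ δ η hS10 hA hB ha1 hb1 hδ1 hη hη1 hA' hB'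
  · exact key_aux S20 _ _ _ _ _ _ δ η hS20 hA hB ha2 hb2 hδ2 hη hη1 hA' hB'
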